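/- Let G be a quasi-metric kernel on a locally compact Hausdorff space Ω with quasi-metric constant κ. Then G satisfies the weak maximum principle with constant 2κ: for any compactly supported Radon measure μ ∈ M⁺(Ω), if Gμ(x) ≤ 1 for all x in the support of μ, then Gμ(x) ≤ 2κ for all x ∈ Ω. -/

import Mathlib

open MeasureTheory
open scoped ENNReal

/-- The (closed) support of a measure: points all of whose neighborhoods have
positive measure. -/
def msupport {Ω : Type*} [TopologicalSpace Ω] [MeasurableSpace Ω] (μ : Measure Ω) : Set Ω :=
  {x | ∀ U ∈ nhds x, 0 < μ U}

/-- A quasi-metric kernel with quasi-metric constant `κ` satisfies the weak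
maximum principle with constant `2κ`: if `Gμ ≤ 1` on the support of a compactly
supported Radon measure `μ`, then `Gμ ≤ 2κ` everywhere. -/
theorem quasimetric_kernel_WMP {Ω : Type*} [TopologicalSpace Ω]
    [MeasurableSpace Ω] [BorelSpace Ω] [LocallyCompactSpace Ω] [T2Space Ω]
    [SecondCountableTopology Ω]
    (G : Ω → Ω → ℝ≥0∞) (κ : ℝ≥0∞)
    (hlsc : LowerSemicontinuous fun p : Ω × Ω => G p.1 p.2)
    (hpos : ∀ x y, 0 < G x y)
    (hsym : ∀ x y, G x y = G y x)
    (htri : ∀ x y z, (G x y)⁻¹ ≤ κ * ((G x z)⁻¹ + (G z y)⁻¹))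
    (μ : Measure Ω) [IsFiniteMeasure μ]
    (hcpt : IsCompact (msupport μ))
    (hsupp : μ (msupport μ)ᶜ = 0)
    (hle : ∀ x ∈ msupport μ, ∫⁻ y, G x y ∂μ ≤ 1) :
    ∀ x : Ω, ∫⁻ y, G x y ∂μ ≤ 2 * κ := by
  intro x
  -- trivial case κ = ∞
  rcases eq_or_ne κ ∞ with hkt | hkt
  · simp [hkt]
  -- trivial case: empty support (μ = 0)
  rcases Set.eq_empty_or_nonempty (msupport μ) with hS | ⟨x₀, hx₀⟩
  · have hμ : μ = 0 := by
      have : μ Set.univ = 0 := by simpa [hS] using hsupp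
      exact Measure.measure_univ_eq_zero.mp this
    simp [hμ]
  -- κ = 0 is contradictory (G ≡ ∞, so Gμ(x₀) = ∞ > 1)
  rcases eq_or_ne κ 0 with hk0 | hk0
  · exfalso
    have hG : ∀ a b : Ω, G a b = ∞ := by
      intro a b
      have h := htri a b a
      rw [hk0, zero_mul, nonpos_iff_eq_zero, ENNReal.inv_eq_zero] at h
      exact h
    have hμpos : 0 < μ Set.univ := hx₀ Set.univ Filter.univ_mem
    have h1 := hle x₀ hx₀
    rw [show (fun y => G x₀ y) = fun _ => (∞ : ℝ≥0∞) from funext fun y => hG x₀ y] at h1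
    rw [lintegral_const, ENNReal.top_mul hμpos.ne'] at h1
    exact absurd h1 (by simp)
  -- main case
  have hGx : Measurable fun y => G x y := hlsc.measurable.comp measurable_prodMk_left
  set S := msupport μ with hSdef
  set r : ℝ≥0∞ := ⨅ z ∈ S, (G x z)⁻¹ with hrdef
  have hr_le : ∀ y ∈ S, r ≤ (G x y)⁻¹ := fun y hy => iInf₂_le y hy
  have hr_top : r ≠ ∞ :=
    ((iInf₂_le x₀ hx₀).trans_lt (ENNReal.inv_lt_top.2 (hpos x x₀))).ne
  set ε : ℕ → ℝ≥0∞ := fun n => ((n : ℝ≥0∞) + 1)⁻¹ with hεdef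
  have hε0 : ∀ n, ε n ≠ 0 := by
    intro n
    simp [hεdef, ENNReal.inv_ne_zero, ENNReal.add_ne_top]
  have hex : ∀ n : ℕ, ∃ z ∈ S, (G x z)⁻¹ < r + ε n := by
    intro n
    have : r < r + ε n := ENNReal.lt_add_right hr_top (hε0 n)
    obtain ⟨z, hz⟩ := iInf_lt_iff.mp this
    obtain ⟨hzS, hz'⟩ := iInf_lt_iff.mp hz
    exact ⟨z, hzS, hz'⟩
  choose xb hxbS hxb using hex
  set f : ℕ → Ω → ℝ≥0∞ := fun n y => (κ * (2 * (G x y)⁻¹ + ε n))⁻¹ with hfdef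
  have hfmeas : ∀ n, Measurable (f n) :=
    fun n => ((((hGx.inv).const_mul 2).add_const (ε n)).const_mul κ).inv
  have hfmono : Monotone f := by
    intro n m hnm y
    have hεle : ε m ≤ ε n :=
      ENNReal.inv_le_inv' (add_le_add_left (by exact_mod_cast hnm) 1)
    exact ENNReal.inv_le_inv' (mul_le_mul_right (add_le_add_right hεle _) κ)
  have hae : ∀ᵐ y ∂μ, y ∈ S := by
    rw [MeasureTheory.ae_iff]
    exact hsupp
  -- each f n has integral at most 1
  have hfle : ∀ n, ∫⁻ y, f n y ∂μ ≤ 1 := by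
    intro n
    refine le_trans (lintegral_mono_ae (hae.mono fun y hy => ?_)) (hle (xb n) (hxbS n))
    have h1 : (G (xb n) y)⁻¹ ≤ κ * ((G x (xb n))⁻¹ + (G x y)⁻¹) := by
      have := htri (xb n) y x
      rwa [hsym (xb n) x] at this
    have h2 : (G x (xb n))⁻¹ ≤ (G x y)⁻¹ + ε n :=
      (hxb n).le.trans (by gcongr; exact hr_le y hy)
    have h3 : (G (xb n) y)⁻¹ ≤ κ * (2 * (G x y)⁻¹ + ε n) := by
      refine h1.trans ?_
      rw [two_mul]
      calc κ * ((G x (xb n))⁻¹ + (G x y)⁻¹)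
          ≤ κ * (((G x y)⁻¹ + ε n) + (G x y)⁻¹) := by gcongr
        _ = κ * ((G x y)⁻¹ + (G x y)⁻¹ + ε n) := by ring_nf
    calc f n y ≤ ((G (xb n) y)⁻¹)⁻¹ := ENNReal.inv_le_inv' h3
      _ = G (xb n) y := inv_inv _
  -- the supremum of the f n is (2κ)⁻¹ • G x ·
  have hsup : ∀ y, (⨆ n, f n y) = (2 * κ)⁻¹ * G x y := by
    intro y
    have h1 : (⨆ n, f n y) = (⨅ n, κ * (2 * (G x y)⁻¹ + ε n))⁻¹ :=
      (ENNReal.inv_iInf _).symm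
    have h2 : (⨅ n, κ * (2 * (G x y)⁻¹ + ε n)) = κ * (2 * (G x y)⁻¹) := by
      rw [← ENNReal.mul_iInf_of_ne hk0 hkt]
      have h3 : (⨅ n, 2 * (G x y)⁻¹ + ε n) = 2 * (G x y)⁻¹ := by
        rw [← ENNReal.add_iInf]
        have : (⨅ n, ε n) = 0 := by
          refine le_antisymm ?_ zero_le
          by_contra h
          obtain ⟨n, hn⟩ := ENNReal.exists_inv_nat_lt
            (fun h0 => h (le_of_eq h0)) (a := ⨅ n, ε n)
          have : (⨅ m, ε m) ≤ ε n := iInf_le _ n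
          have h4 : ε n ≤ (n : ℝ≥0∞)⁻¹ := ENNReal.inv_le_inv' (by simp)
          exact absurd (this.trans h4) hn.not_ge
        rw [this, add_zero]
      rw [h3]
    rw [h1, h2, ← mul_assoc, ENNReal.mul_inv (Or.inl (by simpa using hk0))
      (Or.inl (by simp [hkt, ENNReal.mul_ne_top])), inv_inv, mul_comm κ 2]
  -- monotone convergence
  have hMCT : (2 * κ)⁻¹ * ∫⁻ y, G x y ∂μ ≤ 1 := by
    calc (2 * κ)⁻¹ * ∫⁻ y, G x y ∂μ = ∫⁻ y, (2 * κ)⁻¹ * G x y ∂μ :=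
          (lintegral_const_mul _ hGx).symm
      _ = ∫⁻ y, ⨆ n, f n y ∂μ := by simp_rw [hsup]
      _ = ⨆ n, ∫⁻ y, f n y ∂μ := lintegral_iSup hfmeas hfmono
      _ ≤ 1 := iSup_le hfle
  have h2k0 : (2 : ℝ≥0∞) * κ ≠ 0 := by simpa using hk0
  have h2kt : (2 : ℝ≥0∞) * κ ≠ ∞ := by simp [ENNReal.mul_ne_top, hkt]
  calc ∫⁻ y, G x y ∂μ = (2 * κ) * ((2 * κ)⁻¹ * ∫⁻ y, G x y ∂μ) := by
        rw [← mul_assoc, ENNReal.mul_inv_cancel h2k0 h2kt, one_mul]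
    _ ≤ (2 * κ) * 1 := by gcongr
    _ = 2 * κ := mul_one _
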